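/- Let A, B be bounded selfadjoint operators on a complex Hilbert space H with spectra in an interval I, and let f, g : I → ℝ be operator convex with f, g ≥ 0 on I. Then for every unit vector x ∈ H, ∫_0^1 ⟨f(tA+(1-t)B)x,x⟩ ⟨g(tA+(1-t)B)x,x⟩ dt ≤ (1/3) M(A,B)(x) + (1/6) N(A,B)(x), where M(A,B)(x) = ⟨f(A)x,x⟩⟨g(A)x,x⟩ + ⟨f(B)x,x⟩⟨g(B)x,x⟩ and N(A,B)(x) = ⟨f(A)x,x⟩⟨g(B)x,x⟩ + ⟨f(B)x,x⟩⟨g(A)x,x⟩. -/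

import Mathlib

set_option synthInstance.maxHeartbeats 400000
set_option maxHeartbeats 1600000

section Aux
variable {H : Type*} [NormedAddCommGroup H] [InnerProductSpace ℂ H] [CompleteSpace H]

lemma aux_inner_mono (P Q : H →L[ℂ] H) (h : P ≤ Q) (x : H) :
    (inner ℂ (P x) x : ℂ).re ≤ (inner ℂ (Q x) x : ℂ).re := by
  have := ((ContinuousLinearMap.le_def P Q).1 h).inner_nonneg_left x
  simp only [ContinuousLinearMap.sub_apply, inner_sub_left, map_sub, RCLike.re_to_complex] at this
  have h2 := (Complex.le_def.1 this).1
  simp only [Complex.zero_re, Complex.sub_re] at h2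
  linarith

lemma aux_inner_nonneg (P : H →L[ℂ] H) (h : (0:H →L[ℂ] H) ≤ P) (x : H) :
    0 ≤ (inner ℂ (P x) x : ℂ).re :=
  by simpa only [Complex.zero_re] using
    (Complex.le_def.1 (((ContinuousLinearMap.nonneg_iff_isPositive P).1 h).inner_nonneg_left x)).1

lemma aux_inner_smul (t : ℝ) (P : H →L[ℂ] H) (x : H) :
    (inner ℂ ((t • P) x) x : ℂ).re = t * (inner ℂ (P x) x : ℂ).re := by
  rw [ContinuousLinearMap.smul_apply, show t • P x = (t:ℂ) • P x by simp [Complex.real_smul],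
    inner_smul_left]
  simp

lemma aux_inner_add (P Q : H →L[ℂ] H) (x : H) :
    (inner ℂ ((P + Q) x) x : ℂ).re = (inner ℂ (P x) x : ℂ).re + (inner ℂ (Q x) x : ℂ).re := by
  rw [ContinuousLinearMap.add_apply, inner_add_left]; simp

lemma aux_comb_spectrum (A B : H →L[ℂ] H) (hA : IsSelfAdjoint A) (hB : IsSelfAdjoint B)
    (m M : ℝ) (hmA : algebraMap ℝ (H →L[ℂ] H) m ≤ A) (hMA : A ≤ algebraMap ℝ (H →L[ℂ] H) M)
    (hmB : algebraMap ℝ (H →L[ℂ] H) m ≤ B) (hMB : B ≤ algebraMap ℝ (H →L[ℂ] H) M)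
    (t : ℝ) (ht0 : 0 ≤ t) (ht1 : t ≤ 1) :
    spectrum ℝ (t • A + (1 - t) • B) ⊆ Set.Icc m M := by
  have hsa : IsSelfAdjoint (t • A + (1 - t) • B) :=
    ((IsSelfAdjoint.all t).smul hA).add ((IsSelfAdjoint.all (1-t)).smul hB)
  have ht1' : (0:ℝ) ≤ 1 - t := by linarith
  have hsplit : ∀ c : H →L[ℂ] H, c = t • c + (1 - t) • c := fun c => by
    rw [← add_smul]; norm_num
  intro y hy
  constructor
  · refine (algebraMap_le_iff_le_spectrum (R := ℝ) (a := t • A + (1 - t) • B) hsa).1 ?_ y hy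
    calc algebraMap ℝ (H →L[ℂ] H) m
        = t • algebraMap ℝ (H →L[ℂ] H) m + (1 - t) • algebraMap ℝ (H →L[ℂ] H) m := hsplit _
      _ ≤ t • A + (1 - t) • B :=
          add_le_add (smul_le_smul_of_nonneg_left hmA ht0) (smul_le_smul_of_nonneg_left hmB ht1')
  · refine (le_algebraMap_iff_spectrum_le (R := ℝ) (a := t • A + (1 - t) • B) hsa).1 ?_ y hy
    calc t • A + (1 - t) • B
        ≤ t • algebraMap ℝ (H →L[ℂ] H) M + (1 - t) • algebraMap ℝ (H →L[ℂ] H) M :=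
          add_le_add (smul_le_smul_of_nonneg_left hMA ht0) (smul_le_smul_of_nonneg_left hMB ht1')
      _ = algebraMap ℝ (H →L[ℂ] H) M := (hsplit _).symm

end Aux

lemma aux_poly_integral (p q r : ℝ) :
    ∫ t in (0:ℝ)..1, (p * t ^ 2 + q * t + r) = p/3 + q/2 + r := by
  have h1 : IntervalIntegrable (fun t : ℝ => p * t ^ 2) MeasureTheory.volume 0 1 :=
    (Continuous.intervalIntegrable (by continuity) _ _)
  have h2 : IntervalIntegrable (fun t : ℝ => q * t) MeasureTheory.volume 0 1 :=
    (Continuous.intervalIntegrable (by continuity) _ _)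
  have h3 : IntervalIntegrable (fun t : ℝ => r) MeasureTheory.volume 0 1 :=
    intervalIntegrable_const
  rw [intervalIntegral.integral_add (h1.add h2) h3, intervalIntegral.integral_add h1 h2,
    intervalIntegral.integral_const_mul, intervalIntegral.integral_const_mul]
  simp [integral_pow, integral_id]
  ring

theorem product_hermite_hadamard_right
    {H : Type*} [NormedAddCommGroup H] [InnerProductSpace ℂ H] [CompleteSpace H]
    (I : Set ℝ) (hI : Set.OrdConnected I)
    (A B : H →L[ℂ] H) (hA : IsSelfAdjoint A) (hB : IsSelfAdjoint B)
    (hspA : spectrum ℝ A ⊆ I) (hspB : spectrum ℝ B ⊆ I)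
    (f g : ℝ → ℝ) (hfc : ContinuousOn f I) (hgc : ContinuousOn g I)
    (hf0 : ∀ t ∈ I, 0 ≤ f t) (hg0 : ∀ t ∈ I, 0 ≤ g t)
    (hf : ∀ C D : H →L[ℂ] H, IsSelfAdjoint C → IsSelfAdjoint D →
      spectrum ℝ C ⊆ I → spectrum ℝ D ⊆ I → ∀ l ∈ Set.Icc (0:ℝ) 1,
      cfc f ((1 - l) • C + l • D) ≤ (1 - l) • cfc f C + l • cfc f D)
    (hg : ∀ C D : H →L[ℂ] H, IsSelfAdjoint C → IsSelfAdjoint D →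
      spectrum ℝ C ⊆ I → spectrum ℝ D ⊆ I → ∀ l ∈ Set.Icc (0:ℝ) 1,
      cfc g ((1 - l) • C + l • D) ≤ (1 - l) • cfc g C + l • cfc g D)
    (x : H) (hx : ‖x‖ = 1) :
    (∫ t in (0:ℝ)..1,
        (inner ℂ ((cfc f (t • A + (1 - t) • B)) x) x : ℂ).re *
          (inner ℂ ((cfc g (t • A + (1 - t) • B)) x) x : ℂ).re) ≤
      (1/3) * ((inner ℂ ((cfc f A) x) x : ℂ).re * (inner ℂ ((cfc g A) x) x : ℂ).re +
               (inner ℂ ((cfc f B) x) x : ℂ).re * (inner ℂ ((cfc g B) x) x : ℂ).re) +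
      (1/6) * ((inner ℂ ((cfc f A) x) x : ℂ).re * (inner ℂ ((cfc g B) x) x : ℂ).re +
               (inner ℂ ((cfc f B) x) x : ℂ).re * (inner ℂ ((cfc g A) x) x : ℂ).re) := by
  -- nontriviality
  have hx0 : x ≠ 0 := by intro h; rw [h] at hx; simp at hx
  have hnt : Nontrivial (H →L[ℂ] H) := by
    refine ⟨1, 0, fun h => hx0 ?_⟩
    have := congrArg (fun T : H →L[ℂ] H => T x) h
    simpa using this
  -- spectral bounds
  set S : Set ℝ := spectrum ℝ A ∪ spectrum ℝ B with hS
  have hScomp : IsCompact S := (spectrum.isCompact A).union (spectrum.isCompact B)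
  have hSne : S.Nonempty := (hA.spectrum_nonempty).mono Set.subset_union_left
  set m : ℝ := sInf S
  set M : ℝ := sSup S
  have hmS : m ∈ S := hScomp.sInf_mem hSne
  have hMS : M ∈ S := hScomp.sSup_mem hSne
  have hSI : S ⊆ I := Set.union_subset hspA hspB
  have hIccI : Set.Icc m M ⊆ I := hI.out (hSI hmS) (hSI hMS)
  have hbddB : BddBelow S := hScomp.bddBelow
  have hbddA : BddAbove S := hScomp.bddAbove
  have hmA : algebraMap ℝ (H →L[ℂ] H) m ≤ A :=
    (algebraMap_le_iff_le_spectrum (R := ℝ) hA).2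
      (fun y hy => csInf_le hbddB (Set.mem_union_left _ hy))
  have hMA : A ≤ algebraMap ℝ (H →L[ℂ] H) M :=
    (le_algebraMap_iff_spectrum_le (R := ℝ) hA).2
      (fun y hy => le_csSup hbddA (Set.mem_union_left _ hy))
  have hmB : algebraMap ℝ (H →L[ℂ] H) m ≤ B :=
    (algebraMap_le_iff_le_spectrum (R := ℝ) hB).2
      (fun y hy => csInf_le hbddB (Set.mem_union_right _ hy))
  have hMB : B ≤ algebraMap ℝ (H →L[ℂ] H) M :=
    (le_algebraMap_iff_spectrum_le (R := ℝ) hB).2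
      (fun y hy => le_csSup hbddA (Set.mem_union_right _ hy))
  have hspC : ∀ t ∈ Set.Icc (0:ℝ) 1, spectrum ℝ (t • A + (1 - t) • B) ⊆ I := fun t ht =>
    (aux_comb_spectrum A B hA hB m M hmA hMA hmB hMB t ht.1 ht.2).trans hIccI
  have hsaC : ∀ t : ℝ, IsSelfAdjoint (t • A + (1 - t) • B) := fun t =>
    ((IsSelfAdjoint.all t).smul hA).add ((IsSelfAdjoint.all (1-t)).smul hB)
  -- abbreviations
  set af := (inner ℂ ((cfc f A) x) x : ℂ).re
  set bf := (inner ℂ ((cfc f B) x) x : ℂ).re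
  set ag := (inner ℂ ((cfc g A) x) x : ℂ).re
  set bg := (inner ℂ ((cfc g B) x) x : ℂ).re
  have haf : 0 ≤ af := aux_inner_nonneg _ (cfc_nonneg (fun y hy => hf0 y (hspA hy))) x
  have hbf : 0 ≤ bf := aux_inner_nonneg _ (cfc_nonneg (fun y hy => hf0 y (hspB hy))) x
  have hag : 0 ≤ ag := aux_inner_nonneg _ (cfc_nonneg (fun y hy => hg0 y (hspA hy))) x
  have hbg : 0 ≤ bg := aux_inner_nonneg _ (cfc_nonneg (fun y hy => hg0 y (hspB hy))) x
  set F : ℝ → ℝ := fun t => (inner ℂ ((cfc f (t • A + (1 - t) • B)) x) x : ℂ).re with hF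
  set G : ℝ → ℝ := fun t => (inner ℂ ((cfc g (t • A + (1 - t) • B)) x) x : ℂ).re with hG
  -- pointwise bounds
  have hFb : ∀ t ∈ Set.Icc (0:ℝ) 1, F t ≤ t * af + (1 - t) * bf := by
    intro t ht
    have hconv := hf B A hB hA hspB hspA t ht
    have hcomm : t • A + (1 - t) • B = (1 - t) • B + t • A := add_comm _ _
    calc F t = (inner ℂ ((cfc f ((1 - t) • B + t • A)) x) x : ℂ).re := by rw [hF]; simp [hcomm]
      _ ≤ (inner ℂ (((1 - t) • cfc f B + t • cfc f A) x) x : ℂ).re := aux_inner_mono _ _ hconv x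
      _ = t * af + (1 - t) * bf := by
          rw [aux_inner_add, aux_inner_smul, aux_inner_smul]; ring
  have hGb : ∀ t ∈ Set.Icc (0:ℝ) 1, G t ≤ t * ag + (1 - t) * bg := by
    intro t ht
    have hconv := hg B A hB hA hspB hspA t ht
    have hcomm : t • A + (1 - t) • B = (1 - t) • B + t • A := add_comm _ _
    calc G t = (inner ℂ ((cfc g ((1 - t) • B + t • A)) x) x : ℂ).re := by rw [hG]; simp [hcomm]
      _ ≤ (inner ℂ (((1 - t) • cfc g B + t • cfc g A) x) x : ℂ).re := aux_inner_mono _ _ hconv x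
      _ = t * ag + (1 - t) * bg := by
          rw [aux_inner_add, aux_inner_smul, aux_inner_smul]; ring
  have hF0 : ∀ t ∈ Set.Icc (0:ℝ) 1, 0 ≤ F t := fun t ht =>
    aux_inner_nonneg _ (cfc_nonneg (fun y hy => hf0 y (hspC t ht hy))) x
  have hG0 : ∀ t ∈ Set.Icc (0:ℝ) 1, 0 ≤ G t := fun t ht =>
    aux_inner_nonneg _ (cfc_nonneg (fun y hy => hg0 y (hspC t ht hy))) x
  have hpt : ∀ t ∈ Set.Icc (0:ℝ) 1,
      F t * G t ≤ (t * af + (1 - t) * bf) * (t * ag + (1 - t) * bg) := by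
    intro t ht
    have h1 : 0 ≤ t * af + (1 - t) * bf :=
      add_nonneg (mul_nonneg ht.1 haf) (mul_nonneg (by linarith [ht.2]) hbf)
    exact mul_le_mul (hFb t ht) (hGb t ht) (hG0 t ht) h1
  -- the polynomial integral
  have hpolyeq : (fun t : ℝ => (t * af + (1 - t) * bf) * (t * ag + (1 - t) * bg)) =
      fun t : ℝ => ((af - bf) * (ag - bg)) * t ^ 2 +
        ((af - bf) * bg + bf * (ag - bg)) * t + bf * bg := by
    funext t; ring
  have hpint : IntervalIntegrable
      (fun t : ℝ => (t * af + (1 - t) * bf) * (t * ag + (1 - t) * bg))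
      MeasureTheory.volume 0 1 :=
    (Continuous.intervalIntegrable (by fun_prop) _ _)
  have hpival : (∫ t in (0:ℝ)..1, (t * af + (1 - t) * bf) * (t * ag + (1 - t) * bg)) =
      (1/3) * (af * ag + bf * bg) + (1/6) * (af * bg + bf * ag) := by
    rw [show (fun t : ℝ => (t * af + (1 - t) * bf) * (t * ag + (1 - t) * bg)) =
      fun t : ℝ => ((af - bf) * (ag - bg)) * t ^ 2 +
        ((af - bf) * bg + bf * (ag - bg)) * t + bf * bg from hpolyeq]
    rw [aux_poly_integral]
    ring
  by_cases hint : IntervalIntegrable (fun t => F t * G t) MeasureTheory.volume 0 1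
  · calc (∫ t in (0:ℝ)..1, F t * G t)
        ≤ ∫ t in (0:ℝ)..1, (t * af + (1 - t) * bf) * (t * ag + (1 - t) * bg) :=
          intervalIntegral.integral_mono_on zero_le_one hint hpint hpt
      _ = _ := hpival
  · rw [intervalIntegral.integral_undef hint]
    have : 0 ≤ (1/3 : ℝ) * (af * ag + bf * bg) + (1/6) * (af * bg + bf * ag) := by positivity
    linarith
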